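/- For every ONE-IN-THREE 3SAT instance φ, the homogenized quartic s_{φh} is coercive (as a function on ℝ^{1+n}) if and only if φ is not satisfiable. -/

import Mathlib

open Finset Filter

/-- Sign of a literal: `1` if positive, `-1` if negated. -/
noncomputable def Eps (c : Bool) : ℝ := if c then 1 else -1

/-- A ONE-IN-THREE 3SAT instance, encoded by a variable-index map `v` and a sign map `b`,
is satisfiable if some Boolean assignment makes exactly one literal true in each clause. -/
def OneInThreeSat {n k : ℕ} (v : Fin k → Fin 3 → Fin n) (b : Fin k → Fin 3 → Bool) : Prop :=
  ∃ a : Fin n → Bool, ∀ i : Fin k, ∃! t : Fin 3, a (v i t) = b i t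

/-- The quartic polynomial `s_φ` associated with a ONE-IN-THREE 3SAT instance. -/
noncomputable def sPhi {n k : ℕ} (v : Fin k → Fin 3 → Fin n) (b : Fin k → Fin 3 → Bool)
    (x : Fin n → ℝ) : ℝ :=
  (∑ i : Fin k,
    (Eps (b i 0) * x (v i 0) + Eps (b i 1) * x (v i 1) + Eps (b i 2) * x (v i 2) + 1) ^ 2)
  + ∑ j : Fin n, (1 - x j ^ 2) ^ 2

/-- The homogenized quartic `s_{φh}(x₀, x)`. -/
noncomputable def sPhiH {n k : ℕ} (v : Fin k → Fin 3 → Fin n) (b : Fin k → Fin 3 → Bool)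
    (x₀ : ℝ) (x : Fin n → ℝ) : ℝ :=
  (∑ i : Fin k,
    x₀ ^ 2 * (Eps (b i 0) * x (v i 0) + Eps (b i 1) * x (v i 1)
      + Eps (b i 2) * x (v i 2) + x₀) ^ 2)
  + ∑ j : Fin n, (x₀ ^ 2 - x j ^ 2) ^ 2

lemma sPhiH_nonneg {n k : ℕ} (v : Fin k → Fin 3 → Fin n) (b : Fin k → Fin 3 → Bool)
    (x₀ : ℝ) (x : Fin n → ℝ) : 0 ≤ sPhiH v b x₀ x := by
  unfold sPhiH
  refine add_nonneg (Finset.sum_nonneg fun i _ => ?_) (Finset.sum_nonneg fun j _ => sq_nonneg _)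
  exact mul_nonneg (sq_nonneg _) (sq_nonneg _)

lemma sPhiH_smul {n k : ℕ} (v : Fin k → Fin 3 → Fin n) (b : Fin k → Fin 3 → Bool)
    (c x₀ : ℝ) (x : Fin n → ℝ) :
    sPhiH v b (c * x₀) (c • x) = c ^ 4 * sPhiH v b x₀ x := by
  simp only [sPhiH, Pi.smul_apply, smul_eq_mul, mul_add, Finset.mul_sum]
  congr 1 <;> exact Finset.sum_congr rfl fun i _ => by ring

lemma sPhiH_continuous {n k : ℕ} (v : Fin k → Fin 3 → Fin n) (b : Fin k → Fin 3 → Bool) :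
    Continuous (fun q : ℝ × (Fin n → ℝ) => sPhiH v b q.1 q.2) := by
  unfold sPhiH
  fun_prop

/-- A nontrivial zero of the homogenized quartic yields a satisfying assignment. -/
lemma sat_of_zero {n k : ℕ} (v : Fin k → Fin 3 → Fin n) (b : Fin k → Fin 3 → Bool)
    (x₀ : ℝ) (x : Fin n → ℝ) (hz : sPhiH v b x₀ x = 0) (hq : ¬(x₀ = 0 ∧ x = 0)) :
    OneInThreeSat v b := by
  unfold sPhiH at hz
  have h1 : ∑ i : Fin k, x₀ ^ 2 * (Eps (b i 0) * x (v i 0) + Eps (b i 1) * x (v i 1)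
      + Eps (b i 2) * x (v i 2) + x₀) ^ 2 = 0 ∧ ∑ j : Fin n, (x₀ ^ 2 - x j ^ 2) ^ 2 = 0 := by
    refine (add_eq_zero_iff_of_nonneg ?_ ?_).mp hz
    · exact Finset.sum_nonneg fun i _ => mul_nonneg (sq_nonneg _) (sq_nonneg _)
    · exact Finset.sum_nonneg fun j _ => sq_nonneg _
  have hsq : ∀ j : Fin n, x j ^ 2 = x₀ ^ 2 := by
    intro j
    have := (Finset.sum_eq_zero_iff_of_nonneg fun j _ => sq_nonneg _).mp h1.2 j (Finset.mem_univ j)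
    have h' := pow_eq_zero_iff (n := 2) (by norm_num) |>.mp this
    linarith [h']
  have hx0 : x₀ ≠ 0 := by
    intro h0
    apply hq
    refine ⟨h0, funext fun j => ?_⟩
    have := hsq j
    rw [h0] at this
    have := pow_eq_zero_iff (n := 2) (by norm_num) |>.mp (by linarith : x j ^ 2 = 0)
    simpa using this
  have hcl : ∀ i : Fin k, Eps (b i 0) * x (v i 0) + Eps (b i 1) * x (v i 1)
      + Eps (b i 2) * x (v i 2) + x₀ = 0 := by
    intro i
    have := (Finset.sum_eq_zero_iff_of_nonneg
      fun i _ => mul_nonneg (sq_nonneg _) (sq_nonneg _)).mp h1.1 i (Finset.mem_univ i)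
    rcases mul_eq_zero.mp this with h | h
    · exact absurd (pow_eq_zero_iff (n := 2) (by norm_num) |>.mp h) hx0
    · exact pow_eq_zero_iff (n := 2) (by norm_num) |>.mp h
  have hpm : ∀ j : Fin n, x j = x₀ ∨ x j = -x₀ := by
    intro j
    have h : (x j - x₀) * (x j + x₀) = 0 := by
      have := hsq j; ring_nf; nlinarith [hsq j]
    rcases mul_eq_zero.mp h with h | h
    · left; linarith
    · right; linarith
  refine ⟨fun j => decide (x j = x₀), fun i => ?_⟩
  have key : ∀ t : Fin 3, Eps (b i t) * x (v i t)
      = if (decide (x (v i t) = x₀) = b i t) then x₀ else -x₀ := by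
    intro t
    have hne : ¬(-x₀ = x₀) := by intro h; apply hx0; linarith
    rcases hpm (v i t) with h | h <;> cases hb : b i t <;>
      simp [Eps, h, hne, hx0]
  have hsum := hcl i
  rw [key 0, key 1, key 2] at hsum
  by_cases h0 : decide (x (v i 0) = x₀) = b i 0 <;>
    by_cases h1 : decide (x (v i 1) = x₀) = b i 1 <;>
      by_cases h2 : decide (x (v i 2) = x₀) = b i 2 <;>
        simp only [h0, h1, h2, if_pos, if_neg, if_true, if_false] at hsum
  · exact absurd (by linarith : x₀ = 0) hx0
  · exact absurd (by linarith : x₀ = 0) hx0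
  · exact absurd (by linarith : x₀ = 0) hx0
  · exact ⟨0, h0, fun t ht => by fin_cases t <;> simp_all⟩
  · exact absurd (by linarith : x₀ = 0) hx0
  · exact ⟨1, h1, fun t ht => by fin_cases t <;> simp_all⟩
  · exact ⟨2, h2, fun t ht => by fin_cases t <;> simp_all⟩
  · exact absurd (by linarith : x₀ = 0) hx0

/-- A satisfying assignment yields a nontrivial zero at `x₀ = 1`. -/
lemma zero_of_sat {n k : ℕ} (v : Fin k → Fin 3 → Fin n) (b : Fin k → Fin 3 → Bool)
    (a : Fin n → Bool) (ha : ∀ i : Fin k, ∃! t : Fin 3, a (v i t) = b i t) :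
    sPhiH v b 1 (fun j => if a j then (1 : ℝ) else -1) = 0 := by
  set x : Fin n → ℝ := fun j => if a j then (1 : ℝ) else -1 with hxdef
  unfold sPhiH
  rw [Finset.sum_eq_zero, Finset.sum_eq_zero, add_zero]
  · intro j _
    rcases Bool.dichotomy (a j) with h | h <;> simp [hxdef, h]
  · intro i _
    have key : ∀ t : Fin 3, Eps (b i t) * x (v i t)
        = if (a (v i t) = b i t) then (1 : ℝ) else -1 := by
      intro t
      rcases Bool.dichotomy (a (v i t)) with h | h <;> cases hb : b i t <;>
        simp [Eps, hxdef, h, hb]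
    rw [key 0, key 1, key 2]
    obtain ⟨t₀, ht₀, hu⟩ := ha i
    fin_cases t₀
    · have n1 : ¬(a (v i 1) = b i 1) := fun h => by simpa using hu 1 h
      have n2 : ¬(a (v i 2) = b i 2) := fun h => by simpa using hu 2 h
      rw [if_pos (show a (v i 0) = b i 0 from ht₀), if_neg n1, if_neg n2]; norm_num
    · have n1 : ¬(a (v i 0) = b i 0) := fun h => by simpa using hu 0 h
      have n2 : ¬(a (v i 2) = b i 2) := fun h => by simpa using hu 2 h
      rw [if_pos (show a (v i 1) = b i 1 from ht₀), if_neg n1, if_neg n2]; norm_num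
    · have n1 : ¬(a (v i 0) = b i 0) := fun h => by simpa using hu 0 h
      have n2 : ¬(a (v i 1) = b i 1) := fun h => by simpa using hu 1 h
      rw [if_pos (show a (v i 2) = b i 2 from ht₀), if_neg n1, if_neg n2]; norm_num

theorem sPhiH_coercive_iff_not_satisfiable {n k : ℕ}
    (v : Fin k → Fin 3 → Fin n) (b : Fin k → Fin 3 → Bool) :
    Tendsto (fun q : ℝ × (Fin n → ℝ) => sPhiH v b q.1 q.2)
      (Bornology.cobounded (ℝ × (Fin n → ℝ))) atTop ↔ ¬ OneInThreeSat v b := by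
  set f : ℝ × (Fin n → ℝ) → ℝ := fun q => sPhiH v b q.1 q.2 with hf
  constructor
  · -- coercive → unsat
    intro hco hsat
    obtain ⟨a, ha⟩ := hsat
    set x : Fin n → ℝ := fun j => if a j then (1 : ℝ) else -1 with hxdef
    have hz : sPhiH v b 1 x = 0 := zero_of_sat v b a ha
    set g : ℝ → ℝ × (Fin n → ℝ) := fun t => (t, t • x) with hg
    have hgc : Tendsto g atTop (Bornology.cobounded (ℝ × (Fin n → ℝ))) := by
      refine tendsto_norm_atTop_iff_cobounded.mp ?_
      refine tendsto_atTop_mono (fun t => ?_) tendsto_id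
      calc (id t : ℝ) ≤ ‖t‖ := le_abs_self t
        _ ≤ ‖g t‖ := norm_fst_le (g t)
    have hcomp := hco.comp hgc
    have hzero : ∀ t : ℝ, f (g t) = 0 := by
      intro t
      show sPhiH v b t (t • x) = 0
      have : sPhiH v b (t * 1) (t • x) = t ^ 4 * sPhiH v b 1 x := sPhiH_smul v b t 1 x
      rw [mul_one] at this
      rw [this, hz, mul_zero]
    have : ∀ᶠ t : ℝ in atTop, (1 : ℝ) ≤ f (g t) := hcomp.eventually (eventually_ge_atTop 1)
    obtain ⟨t, ht⟩ := this.exists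
    rw [hzero t] at ht
    linarith
  · -- unsat → coercive
    intro hunsat
    have hpos : ∀ q : ℝ × (Fin n → ℝ), ‖q‖ = 1 → 0 < f q := by
      intro q hq
      rcases lt_or_eq_of_le (sPhiH_nonneg v b q.1 q.2) with h | h
      · exact h
      · exfalso
        apply hunsat
        refine sat_of_zero v b q.1 q.2 h.symm ?_
        rintro ⟨h1, h2⟩
        have : q = 0 := Prod.ext h1 h2
        rw [this] at hq
        simp at hq
    -- minimum on sphere
    have hsph : IsCompact (Metric.sphere (0 : ℝ × (Fin n → ℝ)) 1) := isCompact_sphere 0 1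
    have hne : (Metric.sphere (0 : ℝ × (Fin n → ℝ)) 1).Nonempty :=
      NormedSpace.sphere_nonempty.mpr zero_le_one
    obtain ⟨q₀, hq₀, hmin⟩ := hsph.exists_isMinOn hne (sPhiH_continuous v b).continuousOn
    have hq₀n : ‖q₀‖ = 1 := by simpa using hq₀
    set c : ℝ := f q₀ with hc
    have hcpos : 0 < c := hpos q₀ hq₀n
    have hlb : ∀ q : ℝ × (Fin n → ℝ), c * ‖q‖ ^ 4 ≤ f q := by
      intro q
      rcases eq_or_ne q 0 with rfl | hq
      · simp; exact (sPhiH_nonneg v b 0 0 : 0 ≤ f 0)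
      · have hn : (0 : ℝ) < ‖q‖ := norm_pos_iff.mpr hq
        set u : ℝ × (Fin n → ℝ) := ‖q‖⁻¹ • q with hu
        have hun : ‖u‖ = 1 := by
          rw [hu, norm_smul]
          simp [abs_of_pos (inv_pos.mpr hn), inv_mul_cancel₀ hn.ne']
        have husph : u ∈ Metric.sphere (0 : ℝ × (Fin n → ℝ)) 1 := by
          simpa using hun
        have hmin' : c ≤ f u := hmin husph
        have hfq : f q = ‖q‖ ^ 4 * f u := by
          have hq1 : q.1 = ‖q‖ * u.1 := by
            rw [hu]; simp [smul_eq_mul]; field_simp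
          have hq2 : q.2 = ‖q‖ • u.2 := by
            rw [hu]
            show q.2 = ‖q‖ • (‖q‖⁻¹ • q.2)
            rw [smul_smul, mul_inv_cancel₀ hn.ne', one_smul]
          show sPhiH v b q.1 q.2 = ‖q‖ ^ 4 * sPhiH v b u.1 u.2
          rw [hq1, hq2, sPhiH_smul]
        rw [hfq]
        have h4 : (0 : ℝ) < ‖q‖ ^ 4 := by positivity
        calc c * ‖q‖ ^ 4 = ‖q‖ ^ 4 * c := by ring
          _ ≤ ‖q‖ ^ 4 * f u := by nlinarith
    refine tendsto_atTop_mono hlb ?_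
    have h1 : Tendsto (fun q : ℝ × (Fin n → ℝ) => ‖q‖) (Bornology.cobounded _) atTop :=
      tendsto_norm_cobounded_atTop
    have h2 : Tendsto (fun r : ℝ => c * r ^ 4) atTop atTop :=
      (tendsto_pow_atTop (by norm_num : (4:ℕ) ≠ 0)).const_mul_atTop hcpos
    exact h2.comp h1
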